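/- For every κ ∈ C, the Lebesgue volume of Δ(κ) equals V(κ) = (1/k!) h(κ) λ(κ)^k − (1/(k+1)!) (∑_{i=1}^k a_i) λ(κ)^{k+1}. -/

import Mathlib

open MeasureTheory Finset
open scoped Pointwise Classical

noncomputable section

namespace ToricStmt

/-- Euclidean `n`-space. -/
abbrev E (n : ℕ) : Type := EuclideanSpace ℝ (Fin n)

/-- The real vector associated to an integer vector. -/
def iv {n : ℕ} (g : Fin n → ℤ) : E n := WithLp.toLp 2 (fun t => (g t : ℝ))

/-- The standard pairing/dot product. -/
def dot {n : ℕ} (u v : E n) : ℝ := ∑ i, u i * v i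

/-- An integer vector is primitive if the gcd of its coordinates is `1`. -/
def IsPrimitive {n : ℕ} (g : Fin n → ℤ) : Prop := Finset.univ.gcd g = 1

/-- The polytope `Δ(κ) = {x : ⟨η i, x⟩ ≤ κ i for all i}`. -/
def Delta {n N : ℕ} (η : Fin N → Fin n → ℤ) (κ : Fin N → ℝ) : Set (E n) :=
  {x | ∀ i, dot (iv (η i)) x ≤ κ i}

/-- The face `F_I(κ)` of `Δ(κ)`. -/
def Face {n N : ℕ} (η : Fin N → Fin n → ℤ) (κ : Fin N → ℝ) (I : Finset (Fin N)) :
    Set (E n) :=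
  {x | x ∈ Delta η κ ∧ ∀ i ∈ I, dot (iv (η i)) x = κ i}

/-- A vertex of `Δ(κ)` is a point which is a face. -/
def IsVertex {n N : ℕ} (η : Fin N → Fin n → ℤ) (κ : Fin N → ℝ) (x : E n) : Prop :=
  ∃ I : Finset (Fin N), Face η κ I = {x}

/-- The dimension of (the affine hull of) a subset of `E n`. -/
def faceDim {n : ℕ} (F : Set (E n)) : ℕ := Module.finrank ℝ (vectorSpan ℝ F)

/-- The set of constraints active at `x`. -/
def activeIdx {n N : ℕ} (η : Fin N → Fin n → ℤ) (κ : Fin N → ℝ) (x : E n) :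
    Finset (Fin N) :=
  Finset.univ.filter fun i => dot (iv (η i)) x = κ i

/-- `Δ(κ)` is a smooth polytope: compact with nonempty interior, all facets of
dimension `n - 1`, and at each vertex exactly `n` facets meet, whose conormals form a
`ℤ`-basis of `ℤⁿ`. -/
def IsSmoothPolytope {n N : ℕ} (η : Fin N → Fin n → ℤ) (κ : Fin N → ℝ) : Prop :=
  IsCompact (Delta η κ) ∧ (interior (Delta η κ)).Nonempty ∧
  (∀ i, faceDim (Face η κ {i}) = n - 1) ∧
  ∀ x, IsVertex η κ x →
    (activeIdx η κ x).card = n ∧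
    Submodule.span ℤ (↑((activeIdx η κ x).image η) : Set (Fin n → ℤ)) = ⊤

/-- A chamber neighbourhood of `κ`: an open connected set of support constants containing
`κ` on which the polytope stays smooth with the same combinatorics. -/
def IsChamberNbhd {n N : ℕ} (η : Fin N → Fin n → ℤ) (κ : Fin N → ℝ)
    (U : Set (Fin N → ℝ)) : Prop :=
  IsOpen U ∧ IsConnected U ∧ κ ∈ U ∧
  ∀ κ' ∈ U, IsSmoothPolytope η κ' ∧
    ∀ I : Finset (Fin N), ((Face η κ' I).Nonempty ↔ (Face η κ I).Nonempty)

/-- The barycenter of `Δ(κ)` with respect to Lebesgue measure. -/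
def bary {n N : ℕ} (η : Fin N → Fin n → ℤ) (κ : Fin N → ℝ) : E n :=
  (volume (Delta η κ)).toReal⁻¹ • ∫ x in Delta η κ, x

/-- `H` is mass linear on `U` with coefficients `γ`. -/
def MassLinearOn {n N : ℕ} (η : Fin N → Fin n → ℤ) (H : E n)
    (U : Set (Fin N → ℝ)) (γ : Fin N → ℝ) : Prop :=
  ∀ κ' ∈ U, dot H (bary η κ') = ∑ i, γ i * κ' i

/-- `v` and `w` are the two endpoints of an edge (a one-dimensional face) of `Δ(κ)`. -/
def IsEdgeBetween {n N : ℕ} (η : Fin N → Fin n → ℤ) (κ : Fin N → ℝ)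
    (v w : E n) : Prop :=
  v ≠ w ∧ IsVertex η κ v ∧ IsVertex η κ w ∧
  ∃ I : Finset (Fin N), Face η κ I = segment ℝ v w

/-- Conormals of the `Δ_k`-bundle over the `1`-simplex determined by `a ∈ ℤᵏ`:
`η_i = -e_i` for `i ≤ k`, `η_{k+1} = e_1 + ⋯ + e_k`, `η_{k+2} = -e_{k+1}`,
`η_{k+3} = e_{k+1} + ∑ a_i e_i`. -/
def bEta (k : ℕ) (a : Fin k → ℤ) : Fin (k + 3) → Fin (k + 1) → ℤ := fun j t =>
  if (j : ℕ) < k then (if (t : ℕ) = (j : ℕ) then -1 else 0)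
  else if (j : ℕ) = k then (if (t : ℕ) < k then 1 else 0)
  else if (j : ℕ) = k + 1 then (if (t : ℕ) = k then -1 else 0)
  else (if ht : (t : ℕ) < k then a ⟨(t : ℕ), ht⟩ else 1)

/-- `λ(κ) = κ_1 + ⋯ + κ_{k+1}`. -/
def lamF (k : ℕ) (κ : Fin (k + 3) → ℝ) : ℝ :=
  ∑ i : Fin (k + 1), κ (Fin.castLE (by omega) i)

/-- `h(κ) = κ_{k+2} + κ_{k+3} + ∑ a_i κ_i`. -/
def hF (k : ℕ) (a : Fin k → ℤ) (κ : Fin (k + 3) → ℝ) : ℝ :=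
  κ ⟨k + 1, by omega⟩ + κ ⟨k + 2, by omega⟩ +
    ∑ i : Fin k, (a i : ℝ) * κ (Fin.castLE (by omega) i)

/-- The chamber of the `Δ_k`-bundle over the `1`-simplex. -/
def chamber (k : ℕ) (a : Fin k → ℤ) : Set (Fin (k + 3) → ℝ) :=
  {κ | 0 < lamF k κ ∧ 0 < hF k a κ ∧
       ∀ i : Fin k, 0 < hF k a κ - lamF k κ * (a i : ℝ)}

section Aux

variable {k : ℕ} (a : Fin k → ℤ)


def Sx (n : ℕ) (lam : ℝ) : Set (Fin n → ℝ) := {x | (∀ i, 0 ≤ x i) ∧ ∑ i, x i ≤ lam}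

lemma measurableSet_Sx (n : ℕ) (lam : ℝ) : MeasurableSet (Sx n lam) := by
  have : Sx n lam = (⋂ i, {x : Fin n → ℝ | 0 ≤ x i}) ∩ {x | ∑ i, x i ≤ lam} := by
    ext x; simp [Sx, Set.mem_iInter]
  rw [this]
  exact (MeasurableSet.iInter fun i =>
      measurableSet_le measurable_const (measurable_pi_apply i)).inter
    (measurableSet_le (Finset.measurable_sum _ fun i _ => measurable_pi_apply i) measurable_const)

lemma slice (n : ℕ) (i : Fin (n+1)) (f : (Fin (n+1) → ℝ) → ENNReal) (hf : Measurable f) :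
    ∫⁻ x, f x = ∫⁻ y : Fin n → ℝ, ∫⁻ t : ℝ, f (Fin.insertNth i t y) := by
  set e := (MeasurableEquiv.piFinSuccAbove (fun _ : Fin (n+1) => ℝ) i).symm
  have h : MeasurePreserving e := (volume_preserving_piFinSuccAbove (fun _ : Fin (n+1) => ℝ) i).symm
  rw [← h.lintegral_comp hf]
  have h2 := MeasureTheory.lintegral_prod_symm (μ := (volume : Measure ℝ))
    (ν := (volume : Measure (Fin n → ℝ))) (f ∘ e) (hf.comp h.measurable).aemeasurable
  simp only [Function.comp] at h2
  exact h2

lemma oneDim (m : ℕ) {M : ℝ} (hM : 0 ≤ M) :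
    ∫⁻ t in Set.Icc (0:ℝ) M, ENNReal.ofReal ((M - t)^m) = ENNReal.ofReal (M^(m+1)/(m+1)) := by
  rw [← ofReal_integral_eq_lintegral_ofReal]
  · congr 1
    rw [MeasureTheory.integral_Icc_eq_integral_Ioc, ← intervalIntegral.integral_of_le hM,
      intervalIntegral.integral_comp_sub_left (fun x => x^m) M]
    simp [integral_pow]
  · exact ((continuous_const.sub continuous_id).pow m).integrableOn_Icc
  · filter_upwards [ae_restrict_mem measurableSet_Icc] with t ht
    exact pow_nonneg (by linarith [ht.2]) m

lemma insertNth_mem_Sx {n : ℕ} {lam : ℝ} (i : Fin (n+1)) (t : ℝ) (y : Fin n → ℝ) :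
    Fin.insertNth i t y ∈ Sx (n+1) lam ↔ ((0 ≤ t ∧ ∀ j, 0 ≤ y j) ∧ t + ∑ j, y j ≤ lam) := by
  constructor
  · rintro ⟨h1, h2⟩
    rw [Fin.sum_univ_succAbove (Fin.insertNth i t y) i] at h2
    refine ⟨⟨by simpa using h1 i, fun j => by simpa using h1 (i.succAbove j)⟩, by simpa using h2⟩
  · rintro ⟨⟨ht, hy⟩, hs⟩
    constructor
    · intro j
      refine Fin.succAboveCases i ?_ ?_ j
      · simpa using ht
      · intro j'; simpa using hy j'
    · rw [Fin.sum_univ_succAbove (Fin.insertNth i t y) i]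
      simpa using hs

lemma momL (n : ℕ) : ∀ (m : ℕ) (lam : ℝ), 0 ≤ lam →
    ∫⁻ x in Sx n lam, ENNReal.ofReal ((lam - ∑ i, x i)^m)
      = ENNReal.ofReal (m.factorial * lam^(n+m) / (n+m).factorial) := by
  induction n with
  | zero =>
    intro m lam hlam
    have hS : Sx 0 lam = Set.univ := by
      ext x; simp [Sx, hlam]
    rw [hS, Measure.restrict_univ]
    simp only [Fin.sum_univ_zero, sub_zero]
    rw [lintegral_const]
    have : (volume : Measure (Fin 0 → ℝ)) Set.univ = 1 := by
      rw [MeasureTheory.volume_pi, Measure.pi_univ]; simp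
    rw [this, mul_one]
    congr 1
    have hf : ((0 + m).factorial : ℝ) ≠ 0 := by positivity
    rw [Nat.zero_add]
    field_simp
  | succ n ih =>
    intro m lam hlam
    set g : (Fin (n+1) → ℝ) → ENNReal := fun x => ENNReal.ofReal ((lam - ∑ i, x i)^m) with hg
    have hgm : Measurable g := by
      apply ENNReal.measurable_ofReal.comp
      exact ((measurable_const.sub (Finset.measurable_sum _ fun i _ => measurable_pi_apply i)).pow_const m)
    have hfm : Measurable ((Sx (n+1) lam).indicator g) := hgm.indicator (measurableSet_Sx _ _)
    rw [← lintegral_indicator (measurableSet_Sx _ _), slice n 0 _ hfm]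
    have key : ∀ y : Fin n → ℝ,
        (∫⁻ t : ℝ, (Sx (n+1) lam).indicator g (Fin.insertNth 0 t y))
          = (Sx n lam).indicator
              (fun y => ENNReal.ofReal ((1/(m+1 : ℝ)) * (lam - ∑ j, y j)^(m+1))) y := by
      intro y
      by_cases hy : y ∈ Sx n lam
      · have hy0 : ∀ j, 0 ≤ y j := hy.1
        have hys : ∑ j, y j ≤ lam := hy.2
        have hM : (0:ℝ) ≤ lam - ∑ j, y j := by linarith
        have hpt : ∀ t : ℝ, (Sx (n+1) lam).indicator g (Fin.insertNth 0 t y)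
            = (Set.Icc (0:ℝ) (lam - ∑ j, y j)).indicator
                (fun t => ENNReal.ofReal (((lam - ∑ j, y j) - t)^m)) t := by
          intro t
          by_cases ht : t ∈ Set.Icc (0:ℝ) (lam - ∑ j, y j)
          · rw [Set.indicator_of_mem ht,
              Set.indicator_of_mem ((insertNth_mem_Sx 0 t y).2 ⟨⟨ht.1, hy0⟩, by linarith [ht.2]⟩)]
            show ENNReal.ofReal ((lam - ∑ i, Fin.insertNth 0 t y i)^m) = _
            rw [Fin.sum_univ_succAbove (Fin.insertNth 0 t y) 0]
            simp only [Fin.insertNth_apply_same, Fin.insertNth_apply_succAbove]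
            congr 1
            ring
          · rw [Set.indicator_of_notMem ht, Set.indicator_of_notMem]
            rw [insertNth_mem_Sx]
            rintro ⟨⟨ht0, -⟩, hts⟩
            exact ht ⟨ht0, by linarith⟩
        rw [Set.indicator_of_mem hy]
        calc (∫⁻ t : ℝ, (Sx (n+1) lam).indicator g (Fin.insertNth 0 t y))
            = ∫⁻ t : ℝ, (Set.Icc (0:ℝ) (lam - ∑ j, y j)).indicator
                (fun t => ENNReal.ofReal (((lam - ∑ j, y j) - t)^m)) t := by
              exact lintegral_congr hpt
          _ = ∫⁻ t in Set.Icc (0:ℝ) (lam - ∑ j, y j),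
                ENNReal.ofReal (((lam - ∑ j, y j) - t)^m) := by
              rw [lintegral_indicator measurableSet_Icc]
          _ = ENNReal.ofReal ((lam - ∑ j, y j)^(m+1)/(m+1)) := oneDim m hM
          _ = ENNReal.ofReal ((1/(m+1 : ℝ)) * (lam - ∑ j, y j)^(m+1)) := by
              congr 1; ring
      · rw [Set.indicator_of_notMem hy]
        have hz : ∀ t : ℝ, (Sx (n+1) lam).indicator g (Fin.insertNth 0 t y) = 0 := by
          intro t
          apply Set.indicator_of_notMem
          rw [insertNth_mem_Sx]
          rintro ⟨⟨ht0, hy0⟩, hts⟩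
          exact hy ⟨hy0, by linarith⟩
        calc (∫⁻ t : ℝ, (Sx (n+1) lam).indicator g (Fin.insertNth 0 t y))
            = ∫⁻ _t : ℝ, (0:ENNReal) := lintegral_congr hz
          _ = 0 := lintegral_zero
    rw [lintegral_congr key, lintegral_indicator (measurableSet_Sx _ _)]
    have h1m : (0:ℝ) ≤ 1/(m+1 : ℝ) := by positivity
    have : ∀ y : Fin n → ℝ, ENNReal.ofReal ((1/(m+1 : ℝ)) * (lam - ∑ j, y j)^(m+1))
        = ENNReal.ofReal (1/(m+1 : ℝ)) * ENNReal.ofReal ((lam - ∑ j, y j)^(m+1)) := fun y =>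
      ENNReal.ofReal_mul h1m
    simp only [this]
    rw [lintegral_const_mul _ (by
      apply ENNReal.measurable_ofReal.comp
      exact ((measurable_const.sub (Finset.measurable_sum _ fun i _ => measurable_pi_apply i)).pow_const (m+1)))]
    rw [ih (m+1) lam hlam, ← ENNReal.ofReal_mul h1m]
    congr 1
    have hmf : ((m+1).factorial : ℝ) = (m+1) * m.factorial := by
      rw [Nat.factorial_succ]; push_cast; ring
    have hnm : n + (m+1) = (n+1) + m := by omega
    rw [hnm, hmf]
    have hfac : (((n+1) + m).factorial : ℝ) ≠ 0 := by positivity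
    field_simp


lemma oneDimId {M : ℝ} (hM : 0 ≤ M) :
    ∫⁻ t in Set.Icc (0:ℝ) M, ENNReal.ofReal t = ENNReal.ofReal ((1/2) * M^2) := by
  rw [← ofReal_integral_eq_lintegral_ofReal]
  · congr 1
    rw [MeasureTheory.integral_Icc_eq_integral_Ioc, ← intervalIntegral.integral_of_le hM,
      integral_id]
    ring
  · exact continuous_id.integrableOn_Icc
  · filter_upwards [ae_restrict_mem measurableSet_Icc] with t ht
    exact ht.1

lemma momI (n : ℕ) (i : Fin n) (lam : ℝ) (hlam : 0 ≤ lam) :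
    ∫⁻ x in Sx n lam, ENNReal.ofReal (x i) = ENNReal.ofReal (lam^(n+1) / (n+1).factorial) := by
  cases n with
  | zero => exact i.elim0
  | succ n =>
    set g : (Fin (n+1) → ℝ) → ENNReal := fun x => ENNReal.ofReal (x i) with hg
    have hgm : Measurable g := ENNReal.measurable_ofReal.comp (measurable_pi_apply i)
    have hfm : Measurable ((Sx (n+1) lam).indicator g) := hgm.indicator (measurableSet_Sx _ _)
    rw [← lintegral_indicator (measurableSet_Sx _ _), slice n i _ hfm]
    have key : ∀ y : Fin n → ℝ,
        (∫⁻ t : ℝ, (Sx (n+1) lam).indicator g (Fin.insertNth i t y))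
          = (Sx n lam).indicator
              (fun y => ENNReal.ofReal ((1/2 : ℝ) * (lam - ∑ j, y j)^2)) y := by
      intro y
      by_cases hy : y ∈ Sx n lam
      · have hy0 : ∀ j, 0 ≤ y j := hy.1
        have hys : ∑ j, y j ≤ lam := hy.2
        have hM : (0:ℝ) ≤ lam - ∑ j, y j := by linarith
        have hpt : ∀ t : ℝ, (Sx (n+1) lam).indicator g (Fin.insertNth i t y)
            = (Set.Icc (0:ℝ) (lam - ∑ j, y j)).indicator (fun t => ENNReal.ofReal t) t := by
          intro t
          by_cases ht : t ∈ Set.Icc (0:ℝ) (lam - ∑ j, y j)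
          · rw [Set.indicator_of_mem ht,
              Set.indicator_of_mem ((insertNth_mem_Sx i t y).2 ⟨⟨ht.1, hy0⟩, by linarith [ht.2]⟩)]
            simp only [hg]
            rw [Fin.insertNth_apply_same]
          · rw [Set.indicator_of_notMem ht, Set.indicator_of_notMem]
            rw [insertNth_mem_Sx]
            rintro ⟨⟨ht0, -⟩, hts⟩
            exact ht ⟨ht0, by linarith⟩
        rw [Set.indicator_of_mem hy]
        calc (∫⁻ t : ℝ, (Sx (n+1) lam).indicator g (Fin.insertNth i t y))
            = ∫⁻ t in Set.Icc (0:ℝ) (lam - ∑ j, y j), ENNReal.ofReal t := by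
              rw [lintegral_congr hpt, lintegral_indicator measurableSet_Icc]
          _ = ENNReal.ofReal ((1/2 : ℝ) * (lam - ∑ j, y j)^2) := oneDimId hM
      · rw [Set.indicator_of_notMem hy]
        have hz : ∀ t : ℝ, (Sx (n+1) lam).indicator g (Fin.insertNth i t y) = 0 := by
          intro t
          apply Set.indicator_of_notMem
          rw [insertNth_mem_Sx]
          rintro ⟨⟨ht0, hy0⟩, hts⟩
          exact hy ⟨hy0, by linarith⟩
        calc (∫⁻ t : ℝ, (Sx (n+1) lam).indicator g (Fin.insertNth i t y))
            = ∫⁻ _t : ℝ, (0:ENNReal) := lintegral_congr hz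
          _ = 0 := lintegral_zero
    rw [lintegral_congr key, lintegral_indicator (measurableSet_Sx _ _)]
    have h1m : (0:ℝ) ≤ (1/2 : ℝ) := by norm_num
    have heq : ∀ y : Fin n → ℝ, ENNReal.ofReal ((1/2 : ℝ) * (lam - ∑ j, y j)^2)
        = ENNReal.ofReal (1/2 : ℝ) * ENNReal.ofReal ((lam - ∑ j, y j)^2) := fun y =>
      ENNReal.ofReal_mul h1m
    simp only [heq]
    rw [lintegral_const_mul _ (by
      exact ENNReal.measurable_ofReal.comp
        ((measurable_const.sub (Finset.measurable_sum _ fun j _ => measurable_pi_apply j)).pow_const 2))]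
    rw [momL n 2 lam hlam, ← ENNReal.ofReal_mul h1m]
    congr 1
    have h2 : ((Nat.factorial 2 : ℕ) : ℝ) = 2 := by norm_num [Nat.factorial]
    rw [h2]
    have hfac : (((n+2).factorial : ℕ) : ℝ) ≠ 0 := by positivity
    have : n + 1 + 1 = n + 2 := by omega
    rw [this]
    field_simp

lemma volS (n : ℕ) (lam : ℝ) (hlam : 0 ≤ lam) :
    volume (Sx n lam) = ENNReal.ofReal (lam^n / n.factorial) := by
  have h := momL n 0 lam hlam
  simp only [pow_zero, ENNReal.ofReal_one, Nat.factorial_zero, Nat.cast_one, one_mul,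
    Nat.add_zero] at h
  rwa [setLIntegral_one] at h

lemma integral_coord (n : ℕ) (i : Fin n) (lam : ℝ) (hlam : 0 ≤ lam) :
    ∫ x in Sx n lam, x i = lam^(n+1) / (n+1).factorial := by
  rw [MeasureTheory.integral_eq_lintegral_of_nonneg_ae]
  · rw [momI n i lam hlam, ENNReal.toReal_ofReal (by positivity)]
  · exact (ae_restrict_iff' (measurableSet_Sx _ _)).2 (Filter.Eventually.of_forall fun x hx => hx.1 i)
  · exact (measurable_pi_apply i).aestronglyMeasurable

lemma isCompact_Sx (n : ℕ) (lam : ℝ) : IsCompact (Sx n lam) := by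
  refine IsCompact.of_isClosed_subset (isCompact_Icc (a := (0 : Fin n → ℝ)) (b := fun _ => lam)) ?_ ?_
  · have : Sx n lam = (⋂ i, {x : Fin n → ℝ | 0 ≤ x i}) ∩ {x | ∑ i, x i ≤ lam} := by
      ext x; simp [Sx, Set.mem_iInter]
    rw [this]
    exact (isClosed_iInter fun i =>
        isClosed_le continuous_const (continuous_apply i)).inter
      (isClosed_le (by continuity) continuous_const)
  · intro x hx
    constructor
    · intro i; exact hx.1 i
    · intro i
      calc x i ≤ ∑ j, x j := Finset.single_le_sum (fun j _ => hx.1 j) (mem_univ i)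
        _ ≤ lam := hx.2


lemma lamF_eq {k : ℕ} (κ : Fin (k+3) → ℝ) :
    lamF k κ = (∑ j : Fin k, κ ⟨(j:ℕ), by omega⟩) + κ ⟨k, by omega⟩ := by
  rw [lamF, Fin.sum_univ_castSucc]
  congr 1


lemma dotA (j : Fin k) (x : Fin (k+1) → ℝ) :
    ∑ t : Fin (k+1), ((bEta k a ⟨(j:ℕ), by omega⟩ t : ℤ) : ℝ) * x t = -x (Fin.castSucc j) := by
  rw [Finset.sum_eq_single (Fin.castSucc j)]
  · simp [bEta, j.isLt]
  · intro t _ hne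
    have hv : (t:ℕ) ≠ (j:ℕ) := fun h => hne (Fin.ext (by simpa using h))
    simp [bEta, j.isLt, hv]
  · simp

lemma dotB (x : Fin (k+1) → ℝ) :
    ∑ t : Fin (k+1), ((bEta k a ⟨k, by omega⟩ t : ℤ) : ℝ) * x t
      = ∑ j : Fin k, x (Fin.castSucc j) := by
  rw [Fin.sum_univ_castSucc]
  have hlast : ((bEta k a ⟨k, by omega⟩ (Fin.last k) : ℤ) : ℝ) = 0 := by simp [bEta]
  rw [hlast, zero_mul, add_zero]
  refine Finset.sum_congr rfl fun j _ => ?_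
  have : ((bEta k a ⟨k, by omega⟩ (Fin.castSucc j) : ℤ) : ℝ) = 1 := by simp [bEta, j.isLt]
  rw [this, one_mul]

lemma dotC (x : Fin (k+1) → ℝ) :
    ∑ t : Fin (k+1), ((bEta k a ⟨k+1, by omega⟩ t : ℤ) : ℝ) * x t = -x (Fin.last k) := by
  rw [Finset.sum_eq_single (Fin.last k)]
  · simp [bEta]
  · intro t _ hne
    have hv : (t:ℕ) ≠ k := fun h => hne (Fin.ext (by simpa using h))
    simp [bEta, hv]
  · simp

lemma dotD (x : Fin (k+1) → ℝ) :
    ∑ t : Fin (k+1), ((bEta k a ⟨k+2, by omega⟩ t : ℤ) : ℝ) * x t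
      = x (Fin.last k) + ∑ j : Fin k, (a j : ℝ) * x (Fin.castSucc j) := by
  rw [Fin.sum_univ_castSucc]
  have hlast : ((bEta k a ⟨k+2, by omega⟩ (Fin.last k) : ℤ) : ℝ) = 1 := by simp [bEta]
  rw [hlast, one_mul, add_comm]
  congr 1
  refine Finset.sum_congr rfl fun j _ => ?_
  have : ((bEta k a ⟨k+2, by omega⟩ (Fin.castSucc j) : ℤ) : ℝ) = (a j : ℝ) := by
    simp [bEta, j.isLt]
  rw [this]

def Dset (κ : Fin (k+3) → ℝ) : Set (Fin (k+1) → ℝ) :=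
  {x | ∀ i, ∑ t : Fin (k+1), ((bEta k a i t : ℤ) : ℝ) * x t ≤ κ i}

def Tset (κ : Fin (k+3) → ℝ) : Set (Fin k → ℝ) :=
  {y | (∀ j, 0 ≤ y j + κ ⟨(j:ℕ), by omega⟩) ∧ ∑ j, y j ≤ κ ⟨k, by omega⟩}

lemma memD_iff (κ : Fin (k+3) → ℝ) (x : Fin (k+1) → ℝ) :
    x ∈ Dset a κ ↔
      ((x ∘ Fin.castSucc) ∈ Tset κ ∧
        x (Fin.last k) ∈ Set.Icc (-(κ ⟨k+1, by omega⟩))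
          (κ ⟨k+2, by omega⟩ - ∑ j : Fin k, (a j : ℝ) * x (Fin.castSucc j))) := by
  constructor
  · intro h
    refine ⟨⟨fun j => ?_, ?_⟩, ?_, ?_⟩
    · have := h ⟨(j:ℕ), by omega⟩
      rw [dotA] at this
      simp only [Function.comp]
      linarith
    · have := h ⟨k, by omega⟩
      rw [dotB] at this
      simpa using this
    · have := h ⟨k+1, by omega⟩
      rw [dotC] at this
      linarith
    · have := h ⟨k+2, by omega⟩
      rw [dotD] at this
      linarith
  · rintro ⟨⟨h1, h2⟩, h3, h4⟩ i
    rcases lt_or_ge (i:ℕ) k with hik | hik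
    · have hi : i = ⟨((⟨(i:ℕ), hik⟩ : Fin k) : ℕ), by omega⟩ := Fin.ext rfl
      rw [hi, dotA]
      have := h1 ⟨(i:ℕ), hik⟩
      simp only [Function.comp] at this
      linarith
    · have : (i:ℕ) = k ∨ (i:ℕ) = k+1 ∨ (i:ℕ) = k+2 := by omega
      rcases this with hi | hi | hi
      · have hi' : i = ⟨k, by omega⟩ := Fin.ext hi
        rw [hi', dotB]
        simpa [Function.comp] using h2
      · have hi' : i = ⟨k+1, by omega⟩ := Fin.ext hi
        rw [hi', dotC]; linarith
      · have hi' : i = ⟨k+2, by omega⟩ := Fin.ext hi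
        rw [hi', dotD]; linarith


lemma measurableSet_Dset (κ : Fin (k+3) → ℝ) : MeasurableSet (Dset a κ) := by
  have : Dset a κ = ⋂ i, {x : Fin (k+1) → ℝ | ∑ t : Fin (k+1), ((bEta k a i t : ℤ) : ℝ) * x t ≤ κ i} := by
    ext x; simp [Dset, Set.mem_iInter]
  rw [this]
  refine MeasurableSet.iInter fun i => measurableSet_le ?_ measurable_const
  exact Finset.measurable_sum _ fun t _ => (measurable_pi_apply t).const_mul _

lemma measurableSet_Tset (κ : Fin (k+3) → ℝ) : MeasurableSet (Tset κ) := by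
  have : Tset κ = (⋂ j, {y : Fin k → ℝ | 0 ≤ y j + κ ⟨(j:ℕ), by omega⟩}) ∩
      {y | ∑ j, y j ≤ κ ⟨k, by omega⟩} := by
    ext y; simp [Tset, Set.mem_iInter]
  rw [this]
  refine MeasurableSet.inter (MeasurableSet.iInter fun j => ?_) ?_
  · exact measurableSet_le measurable_const ((measurable_pi_apply j).add_const _)
  · exact measurableSet_le (Finset.measurable_sum _ fun j _ => measurable_pi_apply j) measurable_const

lemma volD_eq (κ : Fin (k+3) → ℝ) :
    volume (Dset a κ) = ∫⁻ y in Tset κ,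
      ENNReal.ofReal ((κ ⟨k+2, by omega⟩ - ∑ j : Fin k, (a j : ℝ) * y j) - (-(κ ⟨k+1, by omega⟩))) := by
  have hDm : MeasurableSet (Dset a κ) := measurableSet_Dset a κ
  have h1 : volume (Dset a κ) = ∫⁻ x, (Dset a κ).indicator (fun _ => (1:ENNReal)) x := by
    rw [lintegral_indicator hDm, setLIntegral_one]
  rw [h1, slice k (Fin.last k) _ (measurable_const.indicator hDm)]
  have hins : ∀ (t : ℝ) (y : Fin k → ℝ) (j : Fin k),
      Fin.insertNth (α := fun _ : Fin (k+1) => ℝ) (Fin.last k) t y (Fin.castSucc j) = y j := by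
    intro t y j
    have := Fin.insertNth_apply_succAbove (α := fun _ : Fin (k+1) => ℝ) (Fin.last k) t y j
    rwa [Fin.succAbove_last] at this
  have hmem : ∀ (t : ℝ) (y : Fin k → ℝ),
      Fin.insertNth (Fin.last k) t y ∈ Dset a κ ↔
        (y ∈ Tset κ ∧ t ∈ Set.Icc (-(κ ⟨k+1, by omega⟩))
          (κ ⟨k+2, by omega⟩ - ∑ j : Fin k, (a j : ℝ) * y j)) := by
    intro t y
    rw [memD_iff]
    have hc : (Fin.insertNth (Fin.last k) t y) ∘ Fin.castSucc = y := funext fun j => hins t y j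
    rw [hc, Fin.insertNth_apply_same]
    constructor
    · rintro ⟨hT, hI⟩
      refine ⟨hT, ?_⟩
      convert hI using 3
      exact (Finset.sum_congr rfl fun j _ => by rw [hins t y j]).symm
    · rintro ⟨hT, hI⟩
      refine ⟨hT, ?_⟩
      convert hI using 3
      exact Finset.sum_congr rfl fun j _ => by rw [hins t y j]
  have key : ∀ y : Fin k → ℝ,
      (∫⁻ t : ℝ, (Dset a κ).indicator (fun _ => (1:ENNReal)) (Fin.insertNth (Fin.last k) t y))
        = (Tset κ).indicator (fun y => ENNReal.ofReal
            ((κ ⟨k+2, by omega⟩ - ∑ j : Fin k, (a j : ℝ) * y j) - (-(κ ⟨k+1, by omega⟩)))) y := by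
    intro y
    by_cases hy : y ∈ Tset κ
    · have hpt : ∀ t : ℝ, (Dset a κ).indicator (fun _ => (1:ENNReal)) (Fin.insertNth (Fin.last k) t y)
          = (Set.Icc (-(κ ⟨k+1, by omega⟩))
              (κ ⟨k+2, by omega⟩ - ∑ j : Fin k, (a j : ℝ) * y j)).indicator (fun _ => (1:ENNReal)) t := by
        intro t
        by_cases ht : t ∈ Set.Icc (-(κ ⟨k+1, by omega⟩))
            (κ ⟨k+2, by omega⟩ - ∑ j : Fin k, (a j : ℝ) * y j)
        · rw [Set.indicator_of_mem ht, Set.indicator_of_mem ((hmem t y).2 ⟨hy, ht⟩)]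
        · rw [Set.indicator_of_notMem ht, Set.indicator_of_notMem]
          intro hmem'
          exact ht ((hmem t y).1 hmem').2
      rw [lintegral_congr hpt, lintegral_indicator measurableSet_Icc, setLIntegral_one,
        Real.volume_Icc, Set.indicator_of_mem hy]
    · rw [Set.indicator_of_notMem hy]
      have hz : ∀ t : ℝ, (Dset a κ).indicator (fun _ => (1:ENNReal)) (Fin.insertNth (Fin.last k) t y) = 0 := by
        intro t
        apply Set.indicator_of_notMem
        intro hmem'
        exact hy ((hmem t y).1 hmem').1
      calc (∫⁻ t : ℝ, (Dset a κ).indicator (fun _ => (1:ENNReal)) (Fin.insertNth (Fin.last k) t y))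
          = ∫⁻ _t : ℝ, (0:ENNReal) := lintegral_congr hz
        _ = 0 := lintegral_zero
  rw [lintegral_congr key, lintegral_indicator (measurableSet_Tset κ)]


lemma volD_Sx (κ : Fin (k+3) → ℝ) :
    volume (Dset a κ) = ∫⁻ u in Sx k (lamF k κ),
      ENNReal.ofReal (hF k a κ - ∑ j : Fin k, (a j : ℝ) * u j) := by
  rw [volD_eq]
  set c : Fin k → ℝ := fun j => κ ⟨(j:ℕ), by omega⟩ with hc
  have hcsum : ∀ u : Fin k → ℝ, ∑ j, (u j - c j) = ∑ j, u j - ∑ j, c j :=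
    fun u => Finset.sum_sub_distrib _ _
  have hpre : ((· - c) ⁻¹' Tset κ) = Sx k (lamF k κ) := by
    ext u
    simp only [Set.mem_preimage, Tset, Sx, Set.mem_setOf_eq, Pi.sub_apply]
    rw [lamF_eq, hcsum u]
    constructor
    · rintro ⟨h1, h2⟩
      refine ⟨fun j => by have := h1 j; simp only [hc] at this; linarith, by linarith⟩
    · rintro ⟨h1, h2⟩
      refine ⟨fun j => by have := h1 j; simp only [hc]; linarith, by linarith⟩
  have hemb : MeasurableEmbedding (· - c) :=
    (MeasurableEquiv.subRight c).measurableEmbedding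
  have hmp : MeasurePreserving (· - c) (volume : Measure (Fin k → ℝ)) volume :=
    measurePreserving_sub_right volume c
  have htr := hmp.setLIntegral_comp_preimage_emb hemb
    (fun y => ENNReal.ofReal ((κ ⟨k+2, by omega⟩ - ∑ j : Fin k, (a j : ℝ) * y j)
      - (-(κ ⟨k+1, by omega⟩)))) (Tset κ)
  rw [← htr, hpre]
  refine lintegral_congr fun u => ?_
  congr 1
  have h1 : ∑ j : Fin k, (a j : ℝ) * ((u - c) j) = ∑ j, (a j : ℝ) * u j - ∑ j, (a j : ℝ) * c j := by
    rw [← Finset.sum_sub_distrib]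
    exact Finset.sum_congr rfl fun j _ => by rw [Pi.sub_apply]; ring
  rw [h1, hF]
  have h2 : ∑ i : Fin k, (a i : ℝ) * κ (Fin.castLE (by omega) i) = ∑ j, (a j : ℝ) * c j :=
    Finset.sum_congr rfl fun j _ => by rw [hc]; congr 1
  rw [h2]
  ring


end Aux

/-- The volume of the `Δ_k`-bundle over the `1`-simplex determined by
`a` is `V(κ) = (1/k!) h(κ) λ(κ)^k − (1/(k+1)!) (∑ a_i) λ(κ)^{k+1}` on the chamber. -/
theorem stmt4 (k : ℕ) (hk : 1 ≤ k) (a : Fin k → ℤ) :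
    ∀ κ ∈ chamber k a,
      (volume (Delta (bEta k a) κ)).toReal =
        (1 / (Nat.factorial k : ℝ)) * hF k a κ * (lamF k κ) ^ k -
        (1 / (Nat.factorial (k + 1) : ℝ)) * (∑ i, (a i : ℝ)) * (lamF k κ) ^ (k + 1) := by
  intro κ hκ
  obtain ⟨hl, hh, hha⟩ := hκ
  have hlam : (0:ℝ) ≤ lamF k κ := le_of_lt hl
  have hDm : MeasurableSet (Dset a κ) := measurableSet_Dset a κ
  have hvol : volume (Delta (bEta k a) κ) = volume (Dset a κ) := by
    have hDelta : Delta (bEta k a) κ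
        = (MeasurableEquiv.toLp 2 (Fin (k+1) → ℝ)).symm ⁻¹' (Dset a κ) := rfl
    rw [hDelta]
    exact (EuclideanSpace.volume_preserving_symm_measurableEquiv_toLp
      (Fin (k+1))).measure_preimage hDm.nullMeasurableSet
  rw [hvol, volD_Sx a κ]
  have hpos : ∀ u ∈ Sx k (lamF k κ), 0 ≤ hF k a κ - ∑ j : Fin k, (a j : ℝ) * u j := by
    intro u hu
    have hbound : ∀ j : Fin k, (a j : ℝ) ≤ hF k a κ / lamF k κ := by
      intro j
      rw [le_div_iff₀ hl]
      have := hha j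
      linarith
    have h1 : ∑ j : Fin k, (a j : ℝ) * u j ≤ ∑ j : Fin k, (hF k a κ / lamF k κ) * u j :=
      Finset.sum_le_sum fun j _ => mul_le_mul_of_nonneg_right (hbound j) (hu.1 j)
    have h2 : ∑ j : Fin k, (hF k a κ / lamF k κ) * u j = (hF k a κ / lamF k κ) * ∑ j, u j := by
      rw [Finset.mul_sum]
    have h3 : (hF k a κ / lamF k κ) * ∑ j, u j ≤ (hF k a κ / lamF k κ) * lamF k κ :=
      mul_le_mul_of_nonneg_left hu.2 (le_of_lt (div_pos hh hl))
    have h4 : (hF k a κ / lamF k κ) * lamF k κ = hF k a κ := by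
      field_simp
    linarith
  have hcont : Continuous (fun u : Fin k → ℝ => hF k a κ - ∑ j : Fin k, (a j : ℝ) * u j) :=
    continuous_const.sub (continuous_finset_sum _ fun j _ => (continuous_const.mul (continuous_apply j)))
  have hint : IntegrableOn (fun u : Fin k → ℝ => hF k a κ - ∑ j : Fin k, (a j : ℝ) * u j)
      (Sx k (lamF k κ)) :=
    hcont.continuousOn.integrableOn_compact (isCompact_Sx k (lamF k κ))
  have hofInt := MeasureTheory.ofReal_integral_eq_lintegral_ofReal hint
    ((ae_restrict_iff' (measurableSet_Sx _ _)).2 (Filter.Eventually.of_forall hpos))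
  rw [← hofInt, ENNReal.toReal_ofReal (setIntegral_nonneg (measurableSet_Sx _ _) hpos)]
  have hint2 : IntegrableOn (fun u : Fin k → ℝ => ∑ j : Fin k, (a j : ℝ) * u j)
      (Sx k (lamF k κ)) :=
    (continuous_finset_sum _ fun j _ =>
      (continuous_const.mul (continuous_apply j))).continuousOn.integrableOn_compact
        (isCompact_Sx k (lamF k κ))
  have hintc : IntegrableOn (fun _ : Fin k → ℝ => hF k a κ) (Sx k (lamF k κ)) := by
    refine integrableOn_const (ne_of_lt ?_)
    exact (isCompact_Sx k (lamF k κ)).measure_lt_top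
  rw [integral_sub hintc hint2, setIntegral_const]
  rw [integral_finset_sum (f := fun j (u : Fin k → ℝ) => (a j : ℝ) * u j) _ (fun j _ =>
    (continuous_const.mul (continuous_apply j)).continuousOn.integrableOn_compact
      (isCompact_Sx k (lamF k κ)))]
  have hcoord : ∀ j : Fin k, ∫ u in Sx k (lamF k κ), (a j : ℝ) * u j
      = (a j : ℝ) * ((lamF k κ)^(k+1) / (k+1).factorial) := by
    intro j
    rw [MeasureTheory.integral_const_mul, integral_coord k j (lamF k κ) hlam]
  simp only [hcoord]
  rw [measureReal_def, volS k (lamF k κ) hlam, ENNReal.toReal_ofReal (by positivity), smul_eq_mul]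
  rw [← Finset.sum_mul]
  ring


end ToricStmt
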